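/- Let C be a max-plus convex subset of ℝmax^n that is closed in the product topology of ℝmax^n, and let y ∈ ℝmax^n with y ∉ C. Then there exist vectors w', w'' ∈ ℝmax^n and scalars d', d'' ∈ ℝmax such that max(⟨w', x⟩, d') = max(⟨w'', x⟩, d'') for every x ∈ C, while max(⟨w', y⟩, d') ≠ max(⟨w'', y⟩, d''). In other words, every point outside a closed max-plus convex subset of ℝmax^n can be separated from it by a max-plus affine hyperplane. -/

import Mathlib

noncomputable section

/-- `ℝmax = ℝ ∪ {-∞}`, the max-plus semifield. -/
abbrev Rmax := WithBot ℝ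

/-- the order topology on `ℝmax`. -/
noncomputable instance : TopologicalSpace Rmax := Preorder.topology Rmax
instance : OrderTopology Rmax := ⟨rfl⟩

/-- the embedding of `ℝmax = ℝ ∪ {-∞}` into `ℝ̄ = [-∞,+∞]`. -/
def Rmax.toE : Rmax → EReal := WithBot.recBotCoe ⊥ (fun r : ℝ => (r : EReal))

/-- max-plus scalar product `⟨w,x⟩ = max_i (w_i + x_i)` on `ℝmax^n`. -/
def mdot {n : ℕ} (w x : Fin n → Rmax) : Rmax := Finset.univ.sup fun i => w i + x i

/-- residuated difference: `a ⊖ b = a` if `a > b`, and `-∞` otherwise. -/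
def rdiff (a b : Rmax) : Rmax := if b < a then a else ⊥

/-- max-plus convexity of a subset of `ℝmax^n`. -/
def MPConvex {n : ℕ} (C : Set (Fin n → Rmax)) : Prop :=
  ∀ x ∈ C, ∀ y ∈ C, ∀ α β : Rmax, max α β = 0 →
    (fun i => max (α + x i) (β + y i)) ∈ C

namespace RmaxAux

open Set Filter

/-! ### A conditionally complete linear order structure on `Rmax` -/

def pre (s : Set Rmax) : Set ℝ := (fun r : ℝ => (r : Rmax)) ⁻¹' s

open Classical in
noncomputable def rSup (s : Set Rmax) : Rmax :=
  if (pre s).Nonempty ∧ BddAbove (pre s) then ((sSup (pre s) : ℝ) : Rmax) else ⊥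

open Classical in
noncomputable def rInf (s : Set Rmax) : Rmax :=
  if (pre s).Nonempty ∧ BddBelow (pre s) ∧ ⊥ ∉ s then ((sInf (pre s) : ℝ) : Rmax) else ⊥

noncomputable instance cclo : ConditionallyCompleteLinearOrder Rmax where
  __ := (inferInstance : Lattice Rmax)
  __ := (inferInstance : LinearOrder Rmax)
  sSup := rSup
  sInf := rInf
  isLUB_csSup s hne hbdd := by
   refine ⟨fun a ha => ?_, fun a hub => ?_⟩
   ·show a ≤ rSup s
    induction a using WithBot.recBotCoe with
    | bot => exact bot_le
    | coe r =>
      have hbdd' : BddAbove (pre s) := by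
        obtain ⟨u, hu⟩ := hbdd
        induction u using WithBot.recBotCoe with
        | bot => exact absurd (hu ha) (by simp)
        | coe v => exact ⟨v, fun t ht => WithBot.coe_le_coe.1 (hu ht)⟩
      rw [rSup, if_pos ⟨⟨r, ha⟩, hbdd'⟩]
      exact WithBot.coe_le_coe.2 (le_csSup hbdd' ha)
   ·show rSup s ≤ a
    rw [rSup]
    split_ifs with h
    · obtain ⟨⟨r, hr⟩, hbdd⟩ := h
      induction a using WithBot.recBotCoe with
      | bot => exact absurd (hub hr) (by simp)
      | coe v =>
        exact WithBot.coe_le_coe.2 (csSup_le ⟨r, hr⟩ (fun t ht => WithBot.coe_le_coe.1 (hub ht)))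
    · exact bot_le
  isGLB_csInf s hne _ := by
   refine ⟨fun a ha => ?_, fun a hlb => ?_⟩
   ·show rInf s ≤ a
    rw [rInf]
    split_ifs with h
    · obtain ⟨hne, hbdd, hnb⟩ := h
      induction a using WithBot.recBotCoe with
      | bot => exact absurd ha hnb
      | coe r => exact WithBot.coe_le_coe.2 (csInf_le hbdd ha)
    · exact bot_le
   ·show a ≤ rInf s
    induction a using WithBot.recBotCoe with
    | bot => exact bot_le
    | coe v =>
      have hnb : ⊥ ∉ s := fun hb => by simpa using hlb hb
      obtain ⟨x, hx⟩ := hne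
      induction x using WithBot.recBotCoe with
      | bot => exact absurd hx hnb
      | coe r =>
        rw [rInf, if_pos ⟨⟨r, hx⟩, ⟨v, fun t ht => WithBot.coe_le_coe.1 (hlb ht)⟩, hnb⟩]
        exact WithBot.coe_le_coe.2 (le_csInf ⟨r, hx⟩ (fun t ht => WithBot.coe_le_coe.1 (hlb ht)))
  csSup_of_not_bddAbove s hs := by
    show rSup s = rSup ∅
    rw [rSup, rSup, if_neg, if_neg]
    · rintro ⟨⟨r, hr⟩, -⟩; exact hr
    · rintro ⟨-, u, hu⟩
      refine hs ⟨(u : Rmax), ?_⟩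
      intro t ht
      induction t using WithBot.recBotCoe with
      | bot => exact bot_le
      | coe w => exact WithBot.coe_le_coe.2 (hu ht)
  csInf_of_not_bddBelow s hs := absurd ⟨⊥, fun _ _ => bot_le⟩ hs

instance compacticc : CompactIccSpace Rmax :=
  @ConditionallyCompleteLinearOrder.toCompactIccSpace Rmax _ _ (by exact inferInstance)

/-! ### arithmetic and `mdot` toolkit -/

lemma add_max (a b c : Rmax) : max a b + c = max (a + c) (b + c) := by
  rcases le_total a b with h | h
  · rw [max_eq_right h, max_eq_right (add_le_add_left h c)]
  · rw [max_eq_left h, max_eq_left (add_le_add_left h c)]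

lemma le_mdot {n : ℕ} (w x : Fin n → Rmax) (i : Fin n) : w i + x i ≤ mdot w x :=
  Finset.le_sup (f := fun i => w i + x i) (Finset.mem_univ i)

lemma mdot_le {n : ℕ} {w x : Fin n → Rmax} {c : Rmax} (h : ∀ i, w i + x i ≤ c) :
    mdot w x ≤ c := Finset.sup_le fun i _ => h i

lemma mdot_bot {n : ℕ} (x : Fin n → Rmax) : mdot (fun _ => ⊥) x = ⊥ :=
  le_bot_iff.1 (mdot_le fun i => by simp)

lemma mdot_single {n : ℕ} (i : Fin n) (x : Fin n → Rmax) :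
    mdot (fun l => if l = i then (0 : Rmax) else ⊥) x = x i := by
  refine le_antisymm (mdot_le fun l => ?_) ?_
  · by_cases h : l = i
    · subst h; simp
    · simp [h]
  · simpa using le_mdot (fun l => if l = i then (0 : Rmax) else ⊥) x i

lemma mdot_sup {n : ℕ} (w₁ w₂ x : Fin n → Rmax) :
    mdot (fun i => max (w₁ i) (w₂ i)) x = max (mdot w₁ x) (mdot w₂ x) := by
  refine le_antisymm (mdot_le fun i => ?_) (max_le (mdot_le fun i => ?_) (mdot_le fun i => ?_))
  · rw [add_max]
    exact max_le_max (le_mdot _ _ i) (le_mdot _ _ i)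
  · exact le_trans (add_le_add_left (le_max_left (w₁ i) (w₂ i)) (x i))
      (le_mdot (fun i => max (w₁ i) (w₂ i)) x i)
  · exact le_trans (add_le_add_left (le_max_right (w₁ i) (w₂ i)) (x i))
      (le_mdot (fun i => max (w₁ i) (w₂ i)) x i)

lemma coe_unbot' {u : Rmax} (h : u ≠ ⊥) : ((WithBot.unbotD 0 u : ℝ) : Rmax) = u := by
  induction u using WithBot.recBotCoe with
  | bot => exact absurd rfl h
  | coe r => simp

lemma le_coe_of_forall {u : Rmax} {r : ℝ} (h : ∀ m : ℕ, u ≤ ((r + 1 / (m + 1) : ℝ) : Rmax)) :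
    u ≤ (r : Rmax) := by
  induction u using WithBot.recBotCoe with
  | bot => exact bot_le
  | coe s =>
    refine WithBot.coe_le_coe.2 (le_of_forall_pos_le_add fun ε hε => ?_)
    obtain ⟨m, hm⟩ := exists_nat_one_div_lt hε
    exact le_trans (WithBot.coe_le_coe.1 (h m)) (by linarith)

lemma eq_bot_of_forall {u : Rmax} {r : ℝ} (h : ∀ m : ℕ, u ≤ ((r - m : ℝ) : Rmax)) :
    u = ⊥ := by
  induction u using WithBot.recBotCoe with
  | bot => rfl
  | coe s =>
    obtain ⟨m, hm⟩ := exists_nat_gt (r - s)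
    have := WithBot.coe_le_coe.1 (h m)
    linarith

/-! ### topological toolkit -/

lemma isClosed_coord_le {n : ℕ} (i : Fin n) (c : Rmax) :
    IsClosed {u : Fin n → Rmax | u i ≤ c} :=
  isClosed_le (continuous_apply i) continuous_const

lemma isClosed_coord_ge {n : ℕ} (i : Fin n) (c : Rmax) :
    IsClosed {u : Fin n → Rmax | c ≤ u i} :=
  isClosed_le continuous_const (continuous_apply i)

lemma exists_limit {n : ℕ} (v : ℕ → (Fin n → Rmax)) (B : Fin n → Rmax)
    (hB : ∀ k i, v k i ≤ B i) :
    ∃ p : Fin n → Rmax,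
      ∀ s : Set (Fin n → Rmax), IsClosed s → (∀ᶠ k in atTop, v k ∈ s) → p ∈ s := by
  have hK : IsCompact (Set.pi Set.univ fun i => Set.Icc (⊥ : Rmax) (B i)) :=
    isCompact_univ_pi fun _ => isCompact_Icc
  have hle : Filter.map v atTop ≤
      Filter.principal (Set.pi Set.univ fun i => Set.Icc (⊥ : Rmax) (B i)) := by
    rw [Filter.le_principal_iff, Filter.mem_map]
    filter_upwards with k
    exact Set.mem_univ_pi.2 fun i => ⟨bot_le, hB k i⟩
  obtain ⟨p, -, hp⟩ := hK.exists_clusterPt hle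
  refine ⟨p, fun s hs hev => ?_⟩
  have h1 : ClusterPt p (Filter.principal s) :=
    hp.mono (Filter.le_principal_iff.2 (Filter.mem_map.2 hev))
  exact hs.closure_eq ▸ mem_closure_iff_clusterPt.2 h1

lemma tendsto_coe_of_squeeze (r : ℝ) (u : ℕ → Rmax) (hu : ∀ k, u k ≤ (r : Rmax))
    (hl : ∀ k : ℕ, ((r - 1 / (k + 1) : ℝ) : Rmax) < u k) :
    Tendsto u atTop (nhds (r : Rmax)) := by
  rw [tendsto_order]
  constructor
  · intro a ha
    induction a using WithBot.recBotCoe with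
    | bot => exact Eventually.of_forall fun k => lt_of_le_of_lt bot_le (hl k)
    | coe s =>
      have hs : s < r := WithBot.coe_lt_coe.1 ha
      obtain ⟨m, hm⟩ := exists_nat_one_div_lt (show (0 : ℝ) < r - s by linarith)
      rw [eventually_atTop]
      refine ⟨m, fun k hk => lt_of_le_of_lt (WithBot.coe_le_coe.2 ?_) (hl k)⟩
      have h1 : 1 / ((k : ℝ) + 1) ≤ 1 / ((m : ℝ) + 1) := by
        apply one_div_le_one_div_of_le
        · positivity
        · have : (m : ℝ) ≤ (k : ℝ) := Nat.cast_le.2 hk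
          linarith
      linarith
  · intro b hb
    exact Eventually.of_forall fun k => lt_of_le_of_lt (hu k) hb

lemma mem_max_of_mem {n : ℕ} {C : Set (Fin n → Rmax)} (hconv : MPConvex C)
    {x z : Fin n → Rmax} (hx : x ∈ C) (hz : z ∈ C) : x ⊔ z ∈ C := by
  have h := hconv x hx z hz 0 0 (by simp)
  have heq : (fun i => max ((0 : Rmax) + x i) ((0 : Rmax) + z i)) = x ⊔ z := by
    funext i
    simp [Pi.sup_apply]
  rwa [heq] at h

end RmaxAux

open RmaxAux Set Filter

/-- **Separation of a point from a closed max-plus convex subset of `ℝmax^n`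
by a max-plus affine hyperplane.** -/
theorem stmt0 {n : ℕ} (C : Set (Fin n → Rmax)) (hconv : MPConvex C)
    (hclosed : IsClosed C) (y : Fin n → Rmax) (hy : y ∉ C) :
    ∃ (w' w'' : Fin n → Rmax) (d' d'' : Rmax),
      (∀ x ∈ C, max (mdot w' x) d' = max (mdot w'' x) d'') ∧
      max (mdot w' y) d' ≠ max (mdot w'' y) d'' := by
  obtain ⟨a, b, c, d, hC, hlt⟩ :
      ∃ (a b : Fin n → Rmax) (c d : Rmax),
        (∀ x ∈ C, max (mdot a x) c ≤ max (mdot b x) d) ∧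
        max (mdot b y) d < max (mdot a y) c := by
    by_cases hD : ∃ q ∈ C, q ≤ y
    · -- Case B : some point of C lies below y
      obtain ⟨q, hqC, hqy⟩ := hD
      have hB1 : ∃ (i : Fin n) (r ε₀ : ℝ), y i = (r : Rmax) ∧ 0 < ε₀ ∧
          ∀ v ∈ C, v ≤ y → v i ≤ ((r - ε₀ : ℝ) : Rmax) := by
        by_contra hB1
        push_neg at hB1
        have hFne : ∃ i₀, y i₀ ≠ ⊥ := by
          by_contra hF
          push_neg at hF
          have hqe : q = y := funext fun i => le_antisymm (hqy i) (by rw [hF i]; exact bot_le)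
          exact hy (hqe ▸ hqC)
        have pick : ∀ (k : ℕ) (i : Fin n), ∃ v, v ∈ C ∧ v ≤ y ∧
            (y i ≠ ⊥ → (((WithBot.unbotD 0 (y i)) - 1 / (k + 1) : ℝ) : Rmax) < v i) := by
          intro k i
          by_cases hyi : y i ≠ ⊥
          · obtain ⟨r, hr⟩ := WithBot.ne_bot_iff_exists.1 hyi
            obtain ⟨v, hvC, hvy, hvlt⟩ := hB1 i r (1 / (k + 1)) hr.symm (by positivity)
            refine ⟨v, hvC, hvy, fun _ => ?_⟩
            rw [← hr, WithBot.unbotD_coe]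
            exact hvlt
          · exact ⟨q, hqC, hqy, fun h => absurd h hyi⟩
        choose V hVC hVy hVlt using pick
        have hFne' : (Finset.univ.filter (fun i : Fin n => y i ≠ ⊥)).Nonempty := by
          obtain ⟨i₀, hi₀⟩ := hFne
          exact ⟨i₀, by simp [hi₀]⟩
        set F : Finset (Fin n) := Finset.univ.filter (fun i : Fin n => y i ≠ ⊥) with hF
        set w : ℕ → (Fin n → Rmax) := fun k => F.sup' hFne' (V k) with hw
        have hwD : ∀ k, w k ∈ C ∧ w k ≤ y := by
          intro k
          exact Finset.sup'_mem {v : Fin n → Rmax | v ∈ C ∧ v ≤ y}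
            (fun v hv u hu => ⟨mem_max_of_mem hconv hv.1 hu.1, sup_le hv.2 hu.2⟩)
            F hFne' (V k) (fun l _ => ⟨hVC k l, hVy k l⟩)
        have ht : Tendsto w atTop (nhds y) := by
          rw [tendsto_pi_nhds]
          intro l
          by_cases hyl : y l = ⊥
          · have hcst : (fun k => w k l) = fun _ => y l :=
              funext fun k => le_antisymm ((hwD k).2 l) (by rw [hyl]; exact bot_le)
            rw [hcst]
            exact tendsto_const_nhds
          · obtain ⟨r, hr⟩ := WithBot.ne_bot_iff_exists.1 hyl
            rw [← hr]
            apply tendsto_coe_of_squeeze r (fun k => w k l)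
            · intro k
              rw [hr]
              exact (hwD k).2 l
            · intro k
              have hiF : l ∈ F := by simp [hF, hyl]
              have h1 : V k l l ≤ w k l := by
                rw [hw]
                simp only [Finset.sup'_apply]
                exact Finset.le_sup' (fun m => V k m l) hiF
              refine lt_of_lt_of_le ?_ h1
              have h2 := hVlt k l hyl
              rwa [← hr, WithBot.unbotD_coe] at h2
        exact hy (hclosed.mem_of_tendsto ht (Eventually.of_forall fun k => (hwD k).1))
      obtain ⟨i, r, ε₀, hyi, hε₀, hbound⟩ := hB1
      set κ : ℝ := r - ε₀ / 2 with hκ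
      have hκr : κ < r := by rw [hκ]; linarith
      have hκ' : r - ε₀ < κ := by rw [hκ]; linarith
      have claim : ∃ N : ℕ, ∀ x ∈ C, ((κ : ℝ) : Rmax) ≤ x i →
          (∀ l, y l ≠ ⊥ → ((κ : ℝ) : Rmax) + x l ≤ x i + y l) →
          ∃ j, y j = ⊥ ∧ x i ≤ x j + ((N : ℝ) : Rmax) := by
        by_contra hcl
        push_neg at hcl
        choose x hxC hx1 hx2 hx3 using hcl
        have hxi : ∀ k : ℕ, x k i ≠ ⊥ := by
          intro k h
          have h1 := hx1 k
          rw [h] at h1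
          exact absurd h1 (WithBot.not_coe_le_bot κ)
        have hξ : ∀ k : ℕ, x k i = ((WithBot.unbotD 0 (x k i) : ℝ) : Rmax) :=
          fun k => (coe_unbot' (hxi k)).symm
        set ξ : ℕ → ℝ := fun k => WithBot.unbotD 0 (x k i) with hξdef
        have hκξ : ∀ k, κ ≤ ξ k := by
          intro k
          have := hx1 k
          rw [hξ k] at this
          exact WithBot.coe_le_coe.1 this
        set v : ℕ → (Fin n → Rmax) :=
          fun k => fun l => max (((κ - ξ k : ℝ) : Rmax) + x k l) ((0 : Rmax) + q l) with hv
        have hvC : ∀ k, v k ∈ C := by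
          intro k
          refine hconv (x k) (hxC k) q hqC ((κ - ξ k : ℝ) : Rmax) 0 ?_
          rw [max_eq_right]
          rw [← WithBot.coe_zero]
          exact WithBot.coe_le_coe.2 (by linarith [hκξ k])
        have hqi : q i ≤ ((r - ε₀ : ℝ) : Rmax) := hbound q hqC hqy
        have hvi : ∀ k, v k i = ((κ : ℝ) : Rmax) := by
          intro k
          rw [hv]
          simp only [zero_add]
          rw [hξ k, ← WithBot.coe_add]
          have h1 : (κ - ξ k + ξ k : ℝ) = κ := by ring
          rw [h1, max_eq_left]
          exact le_trans hqi (WithBot.coe_le_coe.2 (le_of_lt hκ'))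
        have hvF : ∀ k l, y l ≠ ⊥ → v k l ≤ y l := by
          intro k l hl
          apply max_le
          · by_cases hxl : x k l = ⊥
            · rw [hxl, WithBot.add_bot]
              exact bot_le
            · obtain ⟨t, ht⟩ := WithBot.ne_bot_iff_exists.1 hxl
              obtain ⟨ρ, hρ⟩ := WithBot.ne_bot_iff_exists.1 hl
              have h2 := hx2 k l hl
              rw [hξ k, ← ht, ← hρ, ← WithBot.coe_add, ← WithBot.coe_add] at h2
              rw [← ht, ← hρ, ← WithBot.coe_add]
              exact WithBot.coe_le_coe.2 (by linarith [WithBot.coe_le_coe.1 h2])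
          · rw [zero_add]
            exact hqy l
        have hvT : ∀ (k : ℕ) (j : Fin n), y j = ⊥ → v k j ≤ ((κ - k : ℝ) : Rmax) := by
          intro k j hj
          apply max_le
          · by_cases hxl : x k j = ⊥
            · rw [hxl, WithBot.add_bot]
              exact bot_le
            · obtain ⟨t, ht⟩ := WithBot.ne_bot_iff_exists.1 hxl
              have h3 := hx3 k j hj
              rw [hξ k, ← ht, ← WithBot.coe_add] at h3
              rw [← ht, ← WithBot.coe_add]
              exact WithBot.coe_le_coe.2 (by linarith [WithBot.coe_lt_coe.1 h3])
          · rw [zero_add]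
            exact le_trans (hqy j) (by rw [hj]; exact bot_le)
        have hbox : ∀ (k : ℕ) (l : Fin n),
            v k l ≤ (if y l = ⊥ then ((κ : ℝ) : Rmax) else y l) := by
          intro k l
          by_cases hl : y l = ⊥
          · rw [if_pos hl]
            refine le_trans (hvT k l hl) (WithBot.coe_le_coe.2 ?_)
            have : (0 : ℝ) ≤ k := Nat.cast_nonneg k
            linarith
          · rw [if_neg hl]
            exact hvF k l hl
        obtain ⟨p, hp⟩ := exists_limit v _ hbox
        have hpC : p ∈ C := hp C hclosed (Eventually.of_forall hvC)
        have hpy : p ≤ y := by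
          intro l
          by_cases hl : y l = ⊥
          · rw [hl, le_bot_iff]
            refine eq_bot_of_forall (r := κ) fun m => ?_
            refine hp {u | u l ≤ ((κ - m : ℝ) : Rmax)} (isClosed_coord_le l _) ?_
            rw [eventually_atTop]
            refine ⟨m, fun k hk => le_trans (hvT k l hl) (WithBot.coe_le_coe.2 ?_)⟩
            have : (m : ℝ) ≤ (k : ℝ) := Nat.cast_le.2 hk
            linarith
          · exact hp {u | u l ≤ y l} (isClosed_coord_le l _)
              (Eventually.of_forall fun k => hvF k l hl)
        have hpi : ((κ : ℝ) : Rmax) ≤ p i := by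
          refine hp {u | ((κ : ℝ) : Rmax) ≤ u i} (isClosed_coord_ge i _)
            (Eventually.of_forall fun k => ?_)
          show ((κ : ℝ) : Rmax) ≤ v k i
          rw [hvi k]
        have hfin := le_trans hpi (hbound p hpC hpy)
        exact absurd (WithBot.coe_le_coe.1 hfin) (by linarith)
      obtain ⟨N, hclaim⟩ := claim
      refine ⟨fun l => if l = i then (0 : Rmax) else ⊥,
        fun l => if y l = ⊥ then ((N : ℝ) : Rmax)
          else ((κ - WithBot.unbotD 0 (y l) : ℝ) : Rmax), ⊥, ((κ : ℝ) : Rmax), ?_, ?_⟩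
      · intro x hx
        rw [mdot_single, max_eq_left (bot_le : (⊥ : Rmax) ≤ x i)]
        by_cases hxi : x i = ⊥
        · rw [hxi]
          exact bot_le
        by_cases h1 : ((κ : ℝ) : Rmax) ≤ x i
        · by_cases h2 : ∀ l, y l ≠ ⊥ → ((κ : ℝ) : Rmax) + x l ≤ x i + y l
          · obtain ⟨j, hj, hle⟩ := hclaim x hx h1 h2
            refine le_trans hle (le_trans ?_ (le_max_left _ _))
            refine le_trans (le_of_eq (add_comm _ _)) ?_
            have hmj := le_mdot (fun l => if y l = ⊥ then ((N : ℝ) : Rmax)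
                else ((κ - WithBot.unbotD 0 (y l) : ℝ) : Rmax)) x j
            rwa [if_pos hj] at hmj
          · push_neg at h2
            obtain ⟨l, hl, hlt⟩ := h2
            obtain ⟨ρ, hρ⟩ := WithBot.ne_bot_iff_exists.1 hl
            have hxl : x l ≠ ⊥ := by
              intro h
              rw [h, WithBot.add_bot] at hlt
              exact not_lt_bot hlt
            obtain ⟨t, ht⟩ := WithBot.ne_bot_iff_exists.1 hxl
            obtain ⟨ξ', hξ'⟩ := WithBot.ne_bot_iff_exists.1 hxi
            refine le_trans ?_ (le_trans (le_mdot _ x l) (le_max_left _ _))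
            rw [if_neg hl, ← hρ, WithBot.unbotD_coe, ← hξ', ← ht, ← WithBot.coe_add]
            rw [← hρ, ← ht, ← hξ', ← WithBot.coe_add, ← WithBot.coe_add] at hlt
            exact WithBot.coe_le_coe.2 (by linarith [WithBot.coe_lt_coe.1 hlt])
        · exact le_trans (not_le.1 h1).le (le_max_right _ _)
      · rw [mdot_single, max_eq_left (bot_le : (⊥ : Rmax) ≤ y i), hyi]
        refine max_lt ?_ (WithBot.coe_lt_coe.2 hκr)
        rw [mdot]
        refine (Finset.sup_lt_iff (WithBot.bot_lt_coe r)).2 fun l _ => ?_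
        by_cases hl : y l = ⊥
        · rw [hl, WithBot.add_bot]
          exact WithBot.bot_lt_coe r
        · obtain ⟨ρ, hρ⟩ := WithBot.ne_bot_iff_exists.1 hl
          rw [if_neg hl, ← hρ, WithBot.unbotD_coe, ← WithBot.coe_add]
          exact WithBot.coe_lt_coe.2 (by linarith)
    · -- Case A : no point of C lies below y
      have hA : ∃ N : ℕ, ∀ x ∈ C,
          (∃ l, y l ≠ ⊥ ∧ y l + ((1 / (N + 1) : ℝ) : Rmax) ≤ x l) ∨
          (∃ j, y j = ⊥ ∧ ((-(N : ℝ) : ℝ) : Rmax) ≤ x j) := by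
        by_contra hA
        push_neg at hA
        choose v hvC hv1 hv2 using hA
        have hB : ∀ (k : ℕ) (i : Fin n),
            v k i ≤ (if y i = ⊥ then (0 : Rmax) else y i + ((1 : ℝ) : Rmax)) := by
          intro k i
          by_cases hyi : y i = ⊥
          · rw [if_pos hyi]
            refine le_trans (le_of_lt (hv2 k i hyi)) ?_
            exact_mod_cast WithBot.coe_le_coe.2 (neg_nonpos.2 (Nat.cast_nonneg k))
          · rw [if_neg hyi]
            refine le_trans (le_of_lt (hv1 k i hyi)) (add_le_add_right ?_ (y i))
            refine WithBot.coe_le_coe.2 ?_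
            rw [div_le_one (by positivity)]
            linarith [Nat.cast_nonneg (α := ℝ) k]
        obtain ⟨p, hp⟩ := exists_limit v _ hB
        have hpC : p ∈ C := hp C hclosed (Eventually.of_forall hvC)
        have hpy : p ≤ y := by
          intro i
          by_cases hyi : y i = ⊥
          · rw [hyi, le_bot_iff]
            refine eq_bot_of_forall (r := 0) fun m => ?_
            refine hp {u | u i ≤ ((0 - m : ℝ) : Rmax)} (isClosed_coord_le i _) ?_
            rw [eventually_atTop]
            refine ⟨m, fun k hk => le_trans (le_of_lt (hv2 k i hyi)) (WithBot.coe_le_coe.2 ?_)⟩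
            have : (m : ℝ) ≤ (k : ℝ) := Nat.cast_le.2 hk
            linarith
          · obtain ⟨r, hr⟩ := WithBot.ne_bot_iff_exists.1 hyi
            rw [← hr]
            refine le_coe_of_forall fun m => ?_
            refine hp {u | u i ≤ ((r + 1 / (m + 1) : ℝ) : Rmax)} (isClosed_coord_le i _) ?_
            rw [eventually_atTop]
            refine ⟨m, fun k hk => le_trans (le_of_lt (hv1 k i hyi)) ?_⟩
            rw [← hr]
            rw [← WithBot.coe_add]
            refine WithBot.coe_le_coe.2 ?_
            have h1 : 1 / ((k : ℝ) + 1) ≤ 1 / ((m : ℝ) + 1) := by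
              apply one_div_le_one_div_of_le
              · positivity
              · have : (m : ℝ) ≤ (k : ℝ) := Nat.cast_le.2 hk
                linarith
            linarith
        exact hD ⟨p, hpC, hpy⟩
      obtain ⟨N, hN⟩ := hA
      refine ⟨fun _ => ⊥,
        fun l => if y l = ⊥ then ((N : ℝ) : Rmax)
          else ((-(WithBot.unbotD 0 (y l)) - 1 / (N + 1) : ℝ) : Rmax), 0, ⊥, ?_, ?_⟩
      · intro x hx
        rw [mdot_bot, max_eq_right (bot_le : (⊥ : Rmax) ≤ 0), max_eq_left (bot_le)]
        rcases hN x hx with ⟨l, hl, hge⟩ | ⟨j, hj, hge⟩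
        · obtain ⟨r, hr⟩ := WithBot.ne_bot_iff_exists.1 hl
          refine le_trans ?_ (le_mdot _ x l)
          rw [if_neg hl, ← hr, WithBot.unbotD_coe]
          rw [← hr, ← WithBot.coe_add] at hge
          calc (0 : Rmax) = ((-r - 1 / (N + 1) : ℝ) : Rmax) + ((r + 1 / (N + 1) : ℝ) : Rmax) := by
                rw [← WithBot.coe_add]
                norm_num
          _ ≤ ((-r - 1 / (N + 1) : ℝ) : Rmax) + x l := add_le_add_right hge _
        · refine le_trans ?_ (le_mdot _ x j)
          rw [if_pos hj]
          calc (0 : Rmax) = ((N : ℝ) : Rmax) + ((-(N : ℝ) : ℝ) : Rmax) := by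
                rw [← WithBot.coe_add]; norm_num
          _ ≤ ((N : ℝ) : Rmax) + x j := add_le_add_right hge _
      · rw [mdot_bot, max_eq_right (bot_le : (⊥ : Rmax) ≤ 0), max_eq_left (bot_le)]
        have hbot : (⊥ : Rmax) < 0 := WithBot.bot_lt_coe 0
        rw [mdot]
        refine (Finset.sup_lt_iff hbot).2 fun l _ => ?_
        by_cases hl : y l = ⊥
        · rw [hl]
          simpa using hbot
        · obtain ⟨r, hr⟩ := WithBot.ne_bot_iff_exists.1 hl
          rw [if_neg hl, ← hr, WithBot.unbotD_coe, ← WithBot.coe_add]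
          refine WithBot.coe_lt_coe.2 ?_
          have : 0 < 1 / ((N : ℝ) + 1) := by positivity
          linarith
  refine ⟨fun i => max (a i) (b i), b, max c d, d, fun x hx => ?_, ?_⟩
  · rw [mdot_sup, max_max_max_comm]
    exact max_eq_right (hC x hx)
  · rw [mdot_sup, max_max_max_comm]
    exact ne_of_gt (lt_of_lt_of_le hlt (le_max_left _ _))

end
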